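/- arXiv:2307.11271 — 4 statements merged into one kernel-verified Lean document; each statement's English description precedes it below -/
import Mathlib

section
/- Let ρ₀, ρ₁ be Hermitian matrices with trace 1, let 0 ≤ p ≤ 1, and let M₀, M₁ be Hermitian matrices with M₀ + M₁ = I. Define Err := p·Tr(ρ₀ M₁) + (1-p)·Tr(ρ₁ M₀), r := λ_max(M₀) - λ_min(M₀), and r' := λ_max(M₀) + λ_min(M₀). Then Err ≥ 1/2 - (1/2)‖p ρ₀ - (1-p) ρ₁‖₁ · r - (1/2)(2p-1)(r' - 1), where ‖·‖₁ is the trace norm. -/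
open Matrix BigOperators ComplexOrder

noncomputable def eigMax {d : ℕ} (M : Matrix (Fin d) (Fin d) ℂ) : ℝ :=
  if h : M.IsHermitian then ⨆ i, h.eigenvalues i else 0

noncomputable def eigMin {d : ℕ} (M : Matrix (Fin d) (Fin d) ℂ) : ℝ :=
  if h : M.IsHermitian then ⨅ i, h.eigenvalues i else 0

/-- Trace norm of a Hermitian matrix: sum of absolute values of eigenvalues. -/
noncomputable def traceNorm {d : ℕ} (M : Matrix (Fin d) (Fin d) ℂ) : ℝ :=
  if h : M.IsHermitian then ∑ i, |h.eigenvalues i| else 0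

/-- Real part of the trace. -/
noncomputable def reTr {d : ℕ} (M : Matrix (Fin d) (Fin d) ℂ) : ℝ := (M.trace).re

/-- Frobenius norm. -/
noncomputable def frob {d : ℕ} (M : Matrix (Fin d) (Fin d) ℂ) : ℝ :=
  Real.sqrt (∑ i, ∑ j, ‖M i j‖ ^ 2)


lemma key_trace_bound {d : ℕ} [NeZero d] (X M : Matrix (Fin d) (Fin d) ℂ)
    (hX : X.IsHermitian) (hM : M.IsHermitian) :
    ((X * M).trace).re ≤
      (∑ i, |hX.eigenvalues i|) * (((⨆ i, hM.eigenvalues i) - ⨅ i, hM.eigenvalues i) / 2)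
      + (X.trace).re * (((⨆ i, hM.eigenvalues i) + ⨅ i, hM.eigenvalues i) / 2) := by
  classical
  haveI : Nonempty (Fin d) := ⟨⟨0, Nat.pos_of_ne_zero (NeZero.ne d)⟩⟩
  set lam := hX.eigenvalues with hlam
  set mu := hM.eigenvalues with hmu
  set U : Matrix (Fin d) (Fin d) ℂ := (hX.eigenvectorUnitary : Matrix (Fin d) (Fin d) ℂ) with hUdef
  set V : Matrix (Fin d) (Fin d) ℂ := (hM.eigenvectorUnitary : Matrix (Fin d) (Fin d) ℂ) with hVdef
  have hUU : U * star U = 1 := Matrix.mem_unitaryGroup_iff.mp hX.eigenvectorUnitary.2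
  have hUU' : star U * U = 1 := Matrix.mem_unitaryGroup_iff'.mp hX.eigenvectorUnitary.2
  have hVV : V * star V = 1 := Matrix.mem_unitaryGroup_iff.mp hM.eigenvectorUnitary.2
  set W : Matrix (Fin d) (Fin d) ℂ := star U * V with hWdef
  set Dl : Matrix (Fin d) (Fin d) ℂ := diagonal (RCLike.ofReal ∘ lam) with hDl
  set Dm : Matrix (Fin d) (Fin d) ℂ := diagonal (RCLike.ofReal ∘ mu) with hDm
  have hXeq : X = U * Dl * star U := hX.spectral_theorem
  have hMeq : M = V * Dm * star V := hM.spectral_theorem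
  -- trace of X
  have htX : X.trace = ((∑ i, lam i : ℝ) : ℂ) := by
    rw [hXeq, Matrix.trace_mul_cycle, hUU', Matrix.one_mul, hDl, Matrix.trace_diagonal]
    push_cast
    simp [Function.comp]
  have h1 : X * M = U * (Dl * W * Dm * star W) * star U := by
    rw [hXeq, hMeq]
    simp only [hWdef, Matrix.star_mul, star_star, Matrix.mul_assoc]
    rw [hUU]
    simp [Matrix.mul_assoc]
  have h2 : (X * M).trace = (Dl * W * Dm * star W).trace := by
    rw [h1, Matrix.trace_mul_cycle, hUU', Matrix.one_mul]
  set q : Fin d → Fin d → ℝ := fun i j => Complex.normSq (W i j) with hq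
  have hq0 : ∀ i j, 0 ≤ q i j := fun i j => Complex.normSq_nonneg _
  have hWW : W * star W = 1 := by
    simp only [hWdef, Matrix.star_mul, star_star, Matrix.mul_assoc]
    rw [← Matrix.mul_assoc V, hVV, Matrix.one_mul, hUU']
  have hrow : ∀ i, ∑ j, q i j = 1 := by
    intro i
    have h := congrFun (congrFun hWW i) i
    rw [Matrix.mul_apply] at h
    simp only [Matrix.one_apply_eq] at h
    have h6 : ((∑ j, q i j : ℝ) : ℂ) = 1 := by
      push_cast
      rw [← h]
      refine Finset.sum_congr rfl fun j _ => ?_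
      rw [Matrix.star_apply]
      exact (Complex.mul_conj _).symm
    exact_mod_cast h6
  set s : Fin d → ℝ := fun i => ∑ j, mu j * q i j with hs
  have h3 : (X * M).trace = ((∑ i, lam i * s i : ℝ) : ℂ) := by
    rw [h2, Matrix.trace]
    push_cast
    refine Finset.sum_congr rfl fun i _ => ?_
    simp only [hs]
    push_cast
    rw [Matrix.diag_apply, Matrix.mul_apply, Finset.mul_sum]
    refine Finset.sum_congr rfl fun j _ => ?_
    rw [hDm, hDl, Matrix.mul_diagonal, Matrix.diagonal_mul, Matrix.star_apply]
    have hc : (W i j) * star (W i j) = ((q i j : ℝ) : ℂ) := Complex.mul_conj _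
    calc (RCLike.ofReal ∘ lam) i * W i j * (RCLike.ofReal ∘ mu) j * star (W i j)
        = ((lam i : ℝ) : ℂ) * (((mu j : ℝ) : ℂ) * (W i j * star (W i j))) := by
          simp [Function.comp]
          ring
      _ = _ := by rw [hc]
  set a := ⨅ i, mu i with ha
  set b := ⨆ i, mu i with hb
  have hsle : ∀ i, s i ≤ b := by
    intro i
    calc s i ≤ ∑ j, b * q i j := by
          refine Finset.sum_le_sum fun j _ => ?_
          exact mul_le_mul_of_nonneg_right (le_ciSup (Set.Finite.bddAbove (Set.finite_range mu)) j) (hq0 i j)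
      _ = b := by rw [← Finset.mul_sum, hrow i, mul_one]
  have hsge : ∀ i, a ≤ s i := by
    intro i
    calc a = ∑ j, a * q i j := by rw [← Finset.mul_sum, hrow i, mul_one]
      _ ≤ s i := by
          refine Finset.sum_le_sum fun j _ => ?_
          exact mul_le_mul_of_nonneg_right (ciInf_le (Set.Finite.bddBelow (Set.finite_range mu)) j) (hq0 i j)
  have hterm : ∀ i, lam i * s i ≤ |lam i| * ((b - a) / 2) + lam i * ((a + b) / 2) := by
    intro i
    have h7 : |s i - (a + b) / 2| ≤ (b - a) / 2 := by
      rw [abs_le]; constructor <;> [linarith [hsge i]; linarith [hsle i]]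
    have h8 : lam i * (s i - (a + b) / 2) ≤ |lam i| * ((b - a) / 2) := by
      calc lam i * (s i - (a + b) / 2) ≤ |lam i * (s i - (a + b) / 2)| := le_abs_self _
        _ = |lam i| * |s i - (a + b) / 2| := abs_mul _ _
        _ ≤ |lam i| * ((b - a) / 2) := mul_le_mul_of_nonneg_left h7 (abs_nonneg _)
    nlinarith [h8]
  calc ((X * M).trace).re = ∑ i, lam i * s i := by rw [h3, Complex.ofReal_re]
    _ ≤ ∑ i, (|lam i| * ((b - a) / 2) + lam i * ((a + b) / 2)) := Finset.sum_le_sum fun i _ => hterm i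
    _ = (∑ i, |lam i|) * ((b - a) / 2) + (∑ i, lam i) * ((a + b) / 2) := by
        rw [Finset.sum_add_distrib, ← Finset.sum_mul, ← Finset.sum_mul]
    _ = _ := by rw [htX, Complex.ofReal_re]; ring

/-- General lower bound on the discrimination error. -/
theorem stmt2 {d : ℕ} (p : ℝ) (hp0 : 0 ≤ p) (hp1 : p ≤ 1)
    (ρ₀ ρ₁ M₀ M₁ : Matrix (Fin d) (Fin d) ℂ)
    (hρ₀ : ρ₀.IsHermitian) (hρ₁ : ρ₁.IsHermitian)
    (htr₀ : ρ₀.trace = 1) (htr₁ : ρ₁.trace = 1)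
    (hM₀ : M₀.IsHermitian) (hM₁ : M₁.IsHermitian) (hsum : M₀ + M₁ = 1) :
    p * reTr (ρ₀ * M₁) + (1 - p) * reTr (ρ₁ * M₀) ≥
      1 / 2 - (1 / 2) * traceNorm (p • ρ₀ - (1 - p) • ρ₁) * (eigMax M₀ - eigMin M₀)
        - (1 / 2) * (2 * p - 1) * ((eigMax M₀ + eigMin M₀) - 1) := by
  rcases Nat.eq_zero_or_pos d with hd | hd
  · exfalso
    subst hd
    simp [Matrix.trace] at htr₀
  haveI : NeZero d := ⟨hd.ne'⟩
  have key := fun (X M : Matrix (Fin d) (Fin d) ℂ) (hX : X.IsHermitian) (hM : M.IsHermitian) =>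
    key_trace_bound X M hX hM
  set X : Matrix (Fin d) (Fin d) ℂ := p • ρ₀ - (1 - p) • ρ₁ with hXdef
  have hXh : X.IsHermitian := by
    unfold Matrix.IsHermitian
    rw [hXdef, Matrix.conjTranspose_sub, Matrix.conjTranspose_smul, Matrix.conjTranspose_smul,
      hρ₀.eq, hρ₁.eq]
    simp
  have hM₁eq : M₁ = 1 - M₀ := eq_sub_of_add_eq' hsum
  have htrX : X.trace = ((2 * p - 1 : ℝ) : ℂ) := by
    rw [hXdef, Matrix.trace_sub, Matrix.trace_smul, Matrix.trace_smul, htr₀, htr₁]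
    push_cast [Complex.real_smul]
    ring
  have hXmul : X * M₀ = p • (ρ₀ * M₀) - (1 - p) • (ρ₁ * M₀) := by
    rw [hXdef, Matrix.sub_mul, Matrix.smul_mul, Matrix.smul_mul]
  have hρ0M1 : ρ₀ * M₁ = ρ₀ - ρ₀ * M₀ := by rw [hM₁eq, Matrix.mul_sub, Matrix.mul_one]
  have hErr : p * reTr (ρ₀ * M₁) + (1 - p) * reTr (ρ₁ * M₀) = p - ((X * M₀).trace).re := by
    unfold reTr
    rw [hρ0M1, hXmul, Matrix.trace_sub, Matrix.trace_sub, Matrix.trace_smul,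
      Matrix.trace_smul, htr₀]
    simp [Complex.sub_re, Complex.real_smul, Complex.mul_re]
    ring
  have hkey := key X M₀ hXh hM₀
  rw [htrX, Complex.ofReal_re] at hkey
  unfold traceNorm eigMax eigMin
  rw [dif_pos hXh, dif_pos hM₀, dif_pos hM₀, hErr]
  linarith [hkey]
end

section
/- Let ρ₀, ρ₁ be Hermitian matrices with trace 1 and let M₀, M₁ be Hermitian matrices with M₀ + M₁ = I. Then (1/2)Tr(ρ₀ M₁) + (1/2)Tr(ρ₁ M₀) ≥ 1/2 - (1/2)‖(1/2)ρ₀ - (1/2)ρ₁‖₁ · (λ_max(M₀) - λ_min(M₀)). -/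
open Matrix BigOperators ComplexOrder

lemma trace_eq_sum_eig {d : ℕ} {A : Matrix (Fin d) (Fin d) ℂ} (hA : A.IsHermitian) :
    A.trace = ∑ i, (hA.eigenvalues i : ℂ) := by
  conv_lhs => rw [hA.spectral_theorem, Unitary.conjStarAlgAut_apply]
  rw [Matrix.trace_mul_cycle, (Matrix.mem_unitaryGroup_iff').mp (hA.eigenvectorUnitary).2,
    one_mul, Matrix.trace_diagonal]
  simp [Function.comp]

lemma trace_spectral {d : ℕ} {A B : Matrix (Fin d) (Fin d) ℂ}
    (hA : A.IsHermitian) (hB : B.IsHermitian) :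
    (A * B).trace = ∑ i, ∑ j, (hA.eigenvalues i : ℂ) * (hB.eigenvalues j : ℂ) *
      (Complex.normSq (((star (hA.eigenvectorUnitary : Matrix (Fin d) (Fin d) ℂ)) *
        (hB.eigenvectorUnitary : Matrix (Fin d) (Fin d) ℂ)) i j) : ℂ) := by
  set U := (hA.eigenvectorUnitary : Matrix (Fin d) (Fin d) ℂ) with hU
  set V := (hB.eigenvectorUnitary : Matrix (Fin d) (Fin d) ℂ) with hV
  set W := star U * V with hW
  have h1 : star U * U = 1 := (Matrix.mem_unitaryGroup_iff').mp (hA.eigenvectorUnitary).2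
  have h0 : (A * B).trace = (star U * (A * B) * U).trace := by
    rw [Matrix.trace_mul_cycle]
    rw [(Matrix.mem_unitaryGroup_iff).mp (hA.eigenvectorUnitary).2, one_mul]
  have h2 : star U * (A * B) * U = diagonal (RCLike.ofReal ∘ hA.eigenvalues) * W *
      (diagonal (RCLike.ofReal ∘ hB.eigenvalues) * star W) := by
    conv_lhs => rw [hA.spectral_theorem, hB.spectral_theorem, Unitary.conjStarAlgAut_apply,
      Unitary.conjStarAlgAut_apply]
    rw [hW, Matrix.star_mul, star_star]
    simp only [← Matrix.mul_assoc]
    rw [h1, one_mul]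
  rw [h0, h2]
  rw [Matrix.trace]
  simp only [Matrix.diag_apply, Matrix.mul_apply, Matrix.diagonal_apply, Matrix.star_apply,
    Function.comp, RCLike.ofReal_alg]
  simp only [ite_mul, zero_mul, Finset.sum_ite_eq, Finset.mem_univ, if_true]
  refine Finset.sum_congr rfl fun i _ => Finset.sum_congr rfl fun j _ => ?_
  simp only [Complex.real_smul, mul_one, Complex.star_def]
  rw [mul_mul_mul_comm, Complex.mul_conj]

lemma rowsum_one {d : ℕ} {W : Matrix (Fin d) (Fin d) ℂ} (h : W * star W = 1) (i : Fin d) :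
    ∑ j, Complex.normSq (W i j) = 1 := by
  have h2 := congrArg (fun M : Matrix (Fin d) (Fin d) ℂ => M i i) h
  simp only [Matrix.mul_apply, Matrix.star_apply, Complex.star_def, Complex.mul_conj,
    Matrix.one_apply_eq] at h2
  exact_mod_cast h2

/-- The `p = 1/2` case of the discrimination error bound. -/
theorem stmt3 {d : ℕ} (ρ₀ ρ₁ M₀ M₁ : Matrix (Fin d) (Fin d) ℂ)
    (hρ₀ : ρ₀.IsHermitian) (hρ₁ : ρ₁.IsHermitian)
    (htr₀ : ρ₀.trace = 1) (htr₁ : ρ₁.trace = 1)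
    (hM₀ : M₀.IsHermitian) (hM₁ : M₁.IsHermitian) (hsum : M₀ + M₁ = 1) :
    (1 / 2) * reTr (ρ₀ * M₁) + (1 / 2) * reTr (ρ₁ * M₀) ≥
      1 / 2 - (1 / 2) * traceNorm ((1 / 2 : ℝ) • ρ₀ - (1 / 2 : ℝ) • ρ₁)
        * (eigMax M₀ - eigMin M₀) := by
  set Δ : Matrix (Fin d) (Fin d) ℂ := (1/2:ℝ) • ρ₀ - (1/2:ℝ) • ρ₁ with hΔdef
  have hΔ : Δ.IsHermitian := by
    rw [Matrix.IsHermitian, hΔdef]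
    simp [Matrix.conjTranspose_sub, Matrix.conjTranspose_smul, hρ₀.eq, hρ₁.eq]
  have hM₁eq : M₁ = 1 - M₀ := eq_sub_of_add_eq' hsum
  have htrΔ : Δ.trace = 0 := by
    rw [hΔdef, Matrix.trace_sub, Matrix.trace_smul, Matrix.trace_smul, htr₀, htr₁]
    simp
  set lam := hΔ.eigenvalues with hlam
  set mu := hM₀.eigenvalues with hmu
  have hsum0 : ∑ i, lam i = 0 := by
    have h := trace_eq_sum_eig hΔ
    rw [htrΔ] at h
    exact_mod_cast h.symm
  set W := star (hΔ.eigenvectorUnitary : Matrix (Fin d) (Fin d) ℂ) *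
    (hM₀.eigenvectorUnitary : Matrix (Fin d) (Fin d) ℂ) with hWdef
  have hWunit : W * star W = 1 := by
    rw [hWdef, Matrix.star_mul, star_star, Matrix.mul_assoc,
      ← Matrix.mul_assoc (hM₀.eigenvectorUnitary : Matrix (Fin d) (Fin d) ℂ),
      (Matrix.mem_unitaryGroup_iff).mp (hM₀.eigenvectorUnitary).2, one_mul,
      (Matrix.mem_unitaryGroup_iff').mp (hΔ.eigenvectorUnitary).2]
  have hrow : ∀ i, ∑ j, Complex.normSq (W i j) = 1 := rowsum_one hWunit
  have hre : reTr (Δ * M₀) = ∑ i, ∑ j, lam i * mu j * Complex.normSq (W i j) := by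
    rw [reTr, trace_spectral hΔ hM₀]
    simp only [← Complex.ofReal_mul, ← Complex.ofReal_sum, Complex.ofReal_re]
    rfl
  have hEmax : eigMax M₀ = ⨆ i, mu i := by rw [eigMax, dif_pos hM₀]
  have hEmin : eigMin M₀ = ⨅ i, mu i := by rw [eigMin, dif_pos hM₀]
  have hmu_le : ∀ j, mu j ≤ eigMax M₀ := fun j => by
    rw [hEmax]; exact le_ciSup (Set.Finite.bddAbove (Set.finite_range _)) j
  have hmu_ge : ∀ j, eigMin M₀ ≤ mu j := fun j => by
    rw [hEmin]; exact ciInf_le (Set.Finite.bddBelow (Set.finite_range _)) j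
  set c : ℝ := (eigMax M₀ + eigMin M₀)/2 with hc
  set r : ℝ := (eigMax M₀ - eigMin M₀)/2 with hr
  have habs : ∀ j, |mu j - c| ≤ r := fun j => by
    have h1 := hmu_le j; have h2 := hmu_ge j
    rw [abs_le]; constructor <;> [skip; skip] <;> simp only [hc, hr] <;> linarith
  have hTN : traceNorm Δ = ∑ i, |lam i| := by rw [traceNorm, dif_pos hΔ]
  have hkey : reTr (Δ * M₀) ≤ traceNorm Δ * r := by
    rw [hre, hTN]
    have expand : ∀ i, ∑ j, lam i * mu j * Complex.normSq (W i j) =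
        (∑ j, lam i * (mu j - c) * Complex.normSq (W i j)) + c * lam i := by
      intro i
      have : ∀ j, lam i * mu j * Complex.normSq (W i j) =
          lam i * (mu j - c) * Complex.normSq (W i j) +
            (c * lam i) * Complex.normSq (W i j) := by intro j; ring
      rw [Finset.sum_congr rfl fun j _ => this j, Finset.sum_add_distrib,
        ← Finset.mul_sum, hrow i, mul_one]
    rw [Finset.sum_congr rfl fun i _ => expand i, Finset.sum_add_distrib,
      ← Finset.mul_sum, hsum0, mul_zero, add_zero]
    calc ∑ i, ∑ j, lam i * (mu j - c) * Complex.normSq (W i j)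
        ≤ ∑ i, ∑ j, |lam i| * r * Complex.normSq (W i j) := by
          refine Finset.sum_le_sum fun i _ => Finset.sum_le_sum fun j _ => ?_
          have hw : (0:ℝ) ≤ Complex.normSq (W i j) := Complex.normSq_nonneg _
          have : lam i * (mu j - c) ≤ |lam i| * r := by
            calc lam i * (mu j - c) ≤ |lam i * (mu j - c)| := le_abs_self _
              _ = |lam i| * |mu j - c| := abs_mul _ _
              _ ≤ |lam i| * r := by
                  exact mul_le_mul_of_nonneg_left (habs j) (abs_nonneg _)
          exact mul_le_mul_of_nonneg_right this hw
      _ = ∑ i, |lam i| * r := by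
          refine Finset.sum_congr rfl fun i _ => ?_
          rw [← Finset.mul_sum, hrow i, mul_one]
      _ = (∑ i, |lam i|) * r := by rw [Finset.sum_mul]
  have hLHS : (1/2) * reTr (ρ₀ * M₁) + (1/2) * reTr (ρ₁ * M₀) = 1/2 - reTr (Δ * M₀) := by
    have h1 : (Δ * M₀).trace = (1/2:ℝ) • (ρ₀*M₀).trace - (1/2:ℝ) • (ρ₁*M₀).trace := by
      rw [hΔdef, Matrix.sub_mul, Matrix.smul_mul, Matrix.smul_mul, Matrix.trace_sub,
        Matrix.trace_smul, Matrix.trace_smul]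
    have h2 : (ρ₀ * M₁).trace = 1 - (ρ₀ * M₀).trace := by
      rw [hM₁eq, Matrix.mul_sub, Matrix.mul_one, Matrix.trace_sub, htr₀]
    simp only [reTr, h1, h2, Complex.sub_re, Complex.one_re, Complex.real_smul,
      Complex.mul_re, Complex.ofReal_re, Complex.ofReal_im]
    ring
  rw [ge_iff_le, hLHS]
  have : reTr (Δ*M₀) ≤ (1/2) * traceNorm Δ * (eigMax M₀ - eigMin M₀) := by
    calc reTr (Δ*M₀) ≤ traceNorm Δ * r := hkey
      _ = (1/2) * traceNorm Δ * (eigMax M₀ - eigMin M₀) := by rw [hr]; ring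
  linarith
end

section
/- Let ρ₀, ρ₁ be Hermitian matrices with trace 1, p ∈ [0,1], and M₀, M₁ Hermitian with M₀ + M₁ = I. If equality holds in the bound p·Tr(ρ₀ M₁) + (1-p)·Tr(ρ₁ M₀) ≥ 1/2 - (1/2)‖p ρ₀ - (1-p) ρ₁‖₁ (λ_max(M₀) - λ_min(M₀)) - (1/2)(2p-1)(λ_max(M₀)+λ_min(M₀)-1), then Tr((p ρ₀ - (1-p) ρ₁)₊ (M₀ - λ_max(M₀) I)) = 0 and Tr((p ρ₀ - (1-p) ρ₁)₋ (M₀ - λ_min(M₀) I)) = 0, i.e., the range of the positive part of p ρ₀ - (1-p) ρ₁ lies in the λ_max(M₀)-eigenspace of M₀ and the range of the negative part lies in the λ_min(M₀)-eigenspace. -/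
open Matrix BigOperators ComplexOrder


lemma trace_re_nonneg' {d : ℕ} {M : Matrix (Fin d) (Fin d) ℂ} (h : M.PosSemidef) :
    0 ≤ (M.trace).re := by
  obtain ⟨B, rfl⟩ : ∃ B : Matrix (Fin d) (Fin d) ℂ, M = Bᴴ * B := by
    open scoped MatrixOrder in exact CStarAlgebra.nonneg_iff_eq_star_mul_self.mp h.nonneg
  simp only [Matrix.trace, Matrix.diag_apply, Matrix.mul_apply, Matrix.conjTranspose_apply,
    Complex.re_sum]
  apply Finset.sum_nonneg; intro i _
  apply Finset.sum_nonneg; intro j _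
  simp only [Complex.mul_re, Complex.star_def, Complex.conj_re, Complex.conj_im, neg_mul,
    sub_neg_eq_add]
  nlinarith [sq_nonneg (B j i).re, sq_nonneg (B j i).im]

lemma reTr_mul_nonneg' {d : ℕ} {A B : Matrix (Fin d) (Fin d) ℂ}
    (hA : A.PosSemidef) (hB : B.PosSemidef) : 0 ≤ ((A * B).trace).re := by
  obtain ⟨C, rfl⟩ : ∃ C : Matrix (Fin d) (Fin d) ℂ, A = Cᴴ * C := by
    open scoped MatrixOrder in exact CStarAlgebra.nonneg_iff_eq_star_mul_self.mp hA.nonneg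
  rw [Matrix.mul_assoc, Matrix.trace_mul_comm]
  exact trace_re_nonneg' (hB.mul_mul_conjTranspose_same C)

lemma conj_diag_posSemidef {d : ℕ} {M : Matrix (Fin d) (Fin d) ℂ} (hM : M.IsHermitian)
    (f : Fin d → ℝ) (hf : ∀ i, 0 ≤ f i) :
    (((hM.eigenvectorUnitary : Matrix (Fin d) (Fin d) ℂ)) *
      Matrix.diagonal (fun i => (f i : ℂ)) *
      star (hM.eigenvectorUnitary : Matrix (Fin d) (Fin d) ℂ)).PosSemidef := by
  rw [Matrix.star_eq_conjTranspose]
  exact (Matrix.posSemidef_diagonal_iff.mpr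
    (fun i => by simpa using Complex.zero_le_real.mpr (hf i))).mul_mul_conjTranspose_same _

lemma spectral_sub_smul {d : ℕ} {M : Matrix (Fin d) (Fin d) ℂ} (hM : M.IsHermitian) (c : ℝ) :
    (c : ℂ) • 1 - M = ((hM.eigenvectorUnitary : Matrix (Fin d) (Fin d) ℂ)) *
      Matrix.diagonal (fun i => ((c - hM.eigenvalues i : ℝ) : ℂ)) *
      star (hM.eigenvectorUnitary : Matrix (Fin d) (Fin d) ℂ) := by
  have hU : (hM.eigenvectorUnitary : Matrix (Fin d) (Fin d) ℂ) *
      star (hM.eigenvectorUnitary : Matrix (Fin d) (Fin d) ℂ) = 1 :=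
    Matrix.mem_unitaryGroup_iff.mp hM.eigenvectorUnitary.2
  conv_lhs => rw [hM.spectral_theorem, Unitary.conjStarAlgAut_apply]
  have : (Matrix.diagonal (fun i => ((c - hM.eigenvalues i : ℝ) : ℂ))) =
      (c : ℂ) • 1 - Matrix.diagonal (RCLike.ofReal ∘ hM.eigenvalues) := by
    rw [Matrix.smul_one_eq_diagonal]
    ext i j
    rcases eq_or_ne i j with h | h <;> simp [Matrix.diagonal_apply, h]
  rw [this, Matrix.mul_sub, Matrix.sub_mul, Matrix.mul_smul, Matrix.smul_mul, Matrix.mul_one, hU]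

lemma traceNorm_eq_aux {d : ℕ} {Δ P N : Matrix (Fin d) (Fin d) ℂ} (hΔ : Δ.IsHermitian)
    (hdec : Δ = P + N) (hP : P.PosSemidef) (hN : (-N).PosSemidef) (hPN : P * N = 0) :
    (∑ i, |hΔ.eigenvalues i|) = ((P - N).trace).re := by
  set U := (hΔ.eigenvectorUnitary : Matrix (Fin d) (Fin d) ℂ) with hUdef
  have hU : U * star U = 1 := Matrix.mem_unitaryGroup_iff.mp hΔ.eigenvectorUnitary.2
  have hUU : star U * U = 1 := Matrix.mem_unitaryGroup_iff'.mp hΔ.eigenvectorUnitary.2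
  set A := U * Matrix.diagonal (fun i => ((|hΔ.eigenvalues i| : ℝ) : ℂ)) * star U with hAdef
  have hA : A.PosSemidef := conj_diag_posSemidef hΔ _ (fun i => abs_nonneg _)
  have hmul : ∀ f g : Fin d → ℂ,
      (U * Matrix.diagonal f * star U) * (U * Matrix.diagonal g * star U) =
        U * Matrix.diagonal (fun i => f i * g i) * star U := by
    intro f g
    calc (U * Matrix.diagonal f * star U) * (U * Matrix.diagonal g * star U)
        = U * (Matrix.diagonal f * ((star U * U) * (Matrix.diagonal g * star U))) := by
          simp only [Matrix.mul_assoc]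
      _ = U * Matrix.diagonal (fun i => f i * g i) * star U := by
          rw [hUU, Matrix.one_mul, ← Matrix.mul_assoc (Matrix.diagonal f),
            Matrix.diagonal_mul_diagonal]
          simp only [Matrix.mul_assoc]
  have hNherm : Nᴴ = N := by
    have h1 := hN.1
    rw [Matrix.IsHermitian, Matrix.conjTranspose_neg, neg_inj] at h1
    exact h1
  have hNP : N * P = 0 := by
    have h2 := congrArg Matrix.conjTranspose hPN
    simpa [Matrix.conjTranspose_mul, hP.1.eq, hNherm] using h2
  have hΔ2 : (Δ ^ 2).PosSemidef := by
    rw [pow_two]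
    nth_rewrite 1 [← hΔ.eq]
    exact Matrix.posSemidef_conjTranspose_mul_self Δ
  have hsq : A ^ 2 = Δ ^ 2 := by
    conv_rhs => rw [hΔ.spectral_theorem, Unitary.conjStarAlgAut_apply]
    rw [pow_two, pow_two, hAdef, hmul, hmul]
    have hfun : (fun i => ((|hΔ.eigenvalues i| : ℝ) : ℂ) * ((|hΔ.eigenvalues i| : ℝ) : ℂ)) =
        fun i => (RCLike.ofReal ∘ hΔ.eigenvalues) i * (RCLike.ofReal ∘ hΔ.eigenvalues) i := by
      funext i
      simp only [Function.comp_apply, RCLike.ofReal]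
      rw [← Complex.ofReal_mul, abs_mul_abs_self, Complex.ofReal_mul]
      rfl
    rw [hfun]
  have hB : (P - N).PosSemidef := by
    have := hP.add hN
    simpa [sub_eq_add_neg] using this
  have hBsq : (P - N) ^ 2 = Δ ^ 2 := by
    rw [hdec]
    simp only [pow_two, Matrix.sub_mul, Matrix.mul_sub, Matrix.add_mul, Matrix.mul_add,
      hPN, hNP]
    abel
  have e12 : A = P - N := by
    open scoped MatrixOrder in
    exact (CFC.sq_eq_sq_iff A (P - N) hA.nonneg hB.nonneg).mp (hsq.trans hBsq.symm)
  have htr : A.trace = ∑ i, ((|hΔ.eigenvalues i| : ℝ) : ℂ) := by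
    rw [hAdef, Matrix.trace_mul_cycle, hUU, Matrix.one_mul, Matrix.trace_diagonal]
  rw [← e12, htr]
  simp [Complex.re_sum]


lemma re_rsmul (r : ℝ) (z : ℂ) : (r • z).re = r * z.re := by
  simp [Complex.real_smul, Complex.mul_re]

lemma re_cmul (r : ℝ) (z : ℂ) : ((r : ℂ) * z).re = r * z.re := by
  simp [Complex.mul_re]

lemma spectral_smul_sub {d : ℕ} {M : Matrix (Fin d) (Fin d) ℂ} (hM : M.IsHermitian) (c : ℝ) :
    M - (c : ℂ) • 1 = ((hM.eigenvectorUnitary : Matrix (Fin d) (Fin d) ℂ)) *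
      Matrix.diagonal (fun i => ((hM.eigenvalues i - c : ℝ) : ℂ)) *
      star (hM.eigenvectorUnitary : Matrix (Fin d) (Fin d) ℂ) := by
  have h := congrArg Neg.neg (spectral_sub_smul hM c)
  rw [neg_sub] at h
  rw [h]
  rw [← Matrix.neg_mul, ← Matrix.mul_neg, Matrix.diagonal_neg]
  have hfun : (fun i => -(((c - hM.eigenvalues i : ℝ)) : ℂ)) =
      (fun i => ((hM.eigenvalues i - c : ℝ) : ℂ)) := by
    funext i; push_cast; ring
  rw [hfun]

/-- Necessity: equality in the general discrimination bound forces
the range of the positive part `P` (resp. the negative part `N ≤ 0`, with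
`p ρ₀ - (1-p) ρ₁ = P + N`) of the difference to lie in the `λ_max(M₀)`-
(resp. `λ_min(M₀)`-) eigenspace of `M₀`, expressed by vanishing traces. -/
theorem stmt5 {d : ℕ} (p : ℝ) (hp0 : 0 ≤ p) (hp1 : p ≤ 1)
    (ρ₀ ρ₁ M₀ M₁ P N : Matrix (Fin d) (Fin d) ℂ)
    (hρ₀ : ρ₀.IsHermitian) (hρ₁ : ρ₁.IsHermitian)
    (htr₀ : ρ₀.trace = 1) (htr₁ : ρ₁.trace = 1)
    (hM₀ : M₀.IsHermitian) (hM₁ : M₁.IsHermitian) (hsum : M₀ + M₁ = 1)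
    (hdecomp : p • ρ₀ - (1 - p) • ρ₁ = P + N)
    (hP : P.PosSemidef) (hN : (-N).PosSemidef) (hPN : P * N = 0)
    (heq : p * reTr (ρ₀ * M₁) + (1 - p) * reTr (ρ₁ * M₀) =
      1 / 2 - (1 / 2) * traceNorm (p • ρ₀ - (1 - p) • ρ₁) * (eigMax M₀ - eigMin M₀)
        - (1 / 2) * (2 * p - 1) * ((eigMax M₀ + eigMin M₀) - 1)) :
    reTr (P * (M₀ - (eigMax M₀ : ℂ) • 1)) = 0 ∧
      reTr (N * (M₀ - (eigMin M₀ : ℂ) • 1)) = 0 := by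
  have hNherm : N.IsHermitian := by
    have h1 := hN.1
    rw [Matrix.IsHermitian, Matrix.conjTranspose_neg, neg_inj] at h1
    exact h1
  have hΔ : (p • ρ₀ - (1 - p) • ρ₁).IsHermitian := by
    rw [hdecomp]; exact hP.1.add hNherm
  set lM := eigMax M₀ with hlMdef
  set lm := eigMin M₀ with hlmdef
  -- spectral bounds for M₀
  have hlM : lM = ⨆ i, hM₀.eigenvalues i := by rw [hlMdef, eigMax, dif_pos hM₀]
  have hlm : lm = ⨅ i, hM₀.eigenvalues i := by rw [hlmdef, eigMin, dif_pos hM₀]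
  have hub : ∀ i, hM₀.eigenvalues i ≤ lM := by
    intro i; rw [hlM]
    exact le_ciSup (Set.Finite.bddAbove (Set.finite_range _)) i
  have hlb : ∀ i, lm ≤ hM₀.eigenvalues i := by
    intro i; rw [hlm]
    exact ciInf_le (Set.Finite.bddBelow (Set.finite_range _)) i
  have psd1 : ((lM : ℂ) • 1 - M₀).PosSemidef := by
    rw [spectral_sub_smul hM₀]
    exact conj_diag_posSemidef hM₀ _ (fun i => sub_nonneg.mpr (hub i))
  have psd2 : (M₀ - (lm : ℂ) • 1).PosSemidef := by
    rw [spectral_smul_sub hM₀]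
    exact conj_diag_posSemidef hM₀ _ (fun i => sub_nonneg.mpr (hlb i))
  -- the two nonnegative quantities
  set X := reTr (P * ((lM : ℂ) • 1 - M₀)) with hXdef
  set Y := reTr ((-N) * (M₀ - (lm : ℂ) • 1)) with hYdef
  have hX0 : 0 ≤ X := reTr_mul_nonneg' hP psd1
  have hY0 : 0 ≤ Y := reTr_mul_nonneg' hN psd2
  -- abbreviations
  set a := reTr (ρ₀ * M₀) with hadef
  set b := reTr (ρ₁ * M₀) with hbdef
  set tP := reTr P with htPdef
  set tN := reTr N with htNdef
  set W := reTr (P * M₀) with hWdef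
  set V := reTr (N * M₀) with hVdef
  -- g1 : reTr (ρ₀ * M₁) = 1 - a
  have hM₁eq : M₁ = 1 - M₀ := eq_sub_of_add_eq' hsum
  have g1 : reTr (ρ₀ * M₁) = 1 - a := by
    rw [hM₁eq, hadef, reTr, reTr, Matrix.mul_sub, Matrix.mul_one, Matrix.trace_sub, htr₀,
      Complex.sub_re, Complex.one_re]
  -- g2 : X = lM * tP - W
  have g2 : X = lM * tP - W := by
    rw [hXdef, hWdef, htPdef, reTr, reTr, reTr, Matrix.mul_sub, Matrix.mul_smul,
      Matrix.mul_one, Matrix.trace_sub, Matrix.trace_smul, Complex.sub_re]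
    congr 1
    rw [smul_eq_mul, re_cmul]
  -- g3 : Y = lm * tN - V
  have g3 : Y = lm * tN - V := by
    rw [hYdef, hVdef, htNdef, reTr, reTr, reTr, Matrix.neg_mul, Matrix.trace_neg,
      Complex.neg_re, Matrix.mul_sub, Matrix.mul_smul, Matrix.mul_one, Matrix.trace_sub,
      Matrix.trace_smul, Complex.sub_re, smul_eq_mul, re_cmul]
    ring
  -- g4 : p * a - (1 - p) * b = W + V
  have g4 : p * a - (1 - p) * b = W + V := by
    have h1 : (p • ρ₀ - (1 - p) • ρ₁) * M₀ = P * M₀ + N * M₀ := by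
      rw [hdecomp, Matrix.add_mul]
    rw [hadef, hbdef, hWdef, hVdef, reTr, reTr, reTr, reTr, ← Complex.add_re,
      ← Matrix.trace_add, ← h1, Matrix.sub_mul, Matrix.smul_mul, Matrix.smul_mul,
      Matrix.trace_sub, Matrix.trace_smul, Matrix.trace_smul, Complex.sub_re,
      re_rsmul, re_rsmul]
  -- g5 : tP + tN = 2 * p - 1
  have g5 : tP + tN = 2 * p - 1 := by
    have h1 : (p • ρ₀ - (1 - p) • ρ₁).trace = P.trace + N.trace := by
      rw [hdecomp, Matrix.trace_add]
    have h2 : (p • ρ₀ - (1 - p) • ρ₁).trace = (p : ℂ) - ((1 - p : ℝ) : ℂ) := by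
      rw [Matrix.trace_sub, Matrix.trace_smul, Matrix.trace_smul, htr₀, htr₁]
      simp [Complex.real_smul]
    rw [htPdef, htNdef, reTr, reTr, ← Complex.add_re, ← h1, h2]
    push_cast
    simp
    ring
  -- g6 : traceNorm Δ = tP - tN
  have g6 : traceNorm (p • ρ₀ - (1 - p) • ρ₁) = tP - tN := by
    rw [traceNorm, dif_pos hΔ, traceNorm_eq_aux hΔ hdecomp hP hN hPN, htPdef, htNdef,
      reTr, reTr, Matrix.trace_sub, Complex.sub_re]
  -- assemble
  rw [g1, g6] at heq
  have key : X + Y = 0 := by linear_combination g2 + g3 + g4 + heq + ((lM + lm) / 2) * g5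
  have hX : X = 0 := by linarith
  have hY : Y = 0 := by linarith
  constructor
  · have : P * (M₀ - (lM : ℂ) • 1) = -(P * ((lM : ℂ) • 1 - M₀)) := by
      rw [← Matrix.mul_neg, neg_sub]
    rw [reTr, this, Matrix.trace_neg, Complex.neg_re, ← reTr, ← hXdef, hX, neg_zero]
  · have : N * (M₀ - (lm : ℂ) • 1) = -((-N) * (M₀ - (lm : ℂ) • 1)) := by
      rw [Matrix.neg_mul, neg_neg]
    rw [reTr, this, Matrix.trace_neg, Complex.neg_re, ← reTr, ← hYdef, hY, neg_zero]
end

section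
/- Let M₀, M₁ be Hermitian d×d matrices with M₀ + M₁ = I, and suppose λ_max(M₀) - λ_min(M₀) > 1. Let x₀ be an interior point of any convex cone C of Hermitian matrices (so there is ε > 0 with the ε-ball around x₀ in Frobenius norm contained in C), and assume Tr x₀ > 0. Then there exist ρ₀, ρ₁ ∈ C with Tr ρ₀ = Tr ρ₁ = 1 such that (1/2)Tr(ρ₀ M₁) + (1/2)Tr(ρ₁ M₀) < 1/2 - (1/2)‖(1/2)ρ₀ - (1/2)ρ₁‖₁. -/
open Matrix BigOperators ComplexOrder

lemma aux_rsmul {d : ℕ} (r : ℝ) (M : Matrix (Fin d) (Fin d) ℂ) :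
    r • M = (r : ℂ) • M := by
  ext i j; simp [Matrix.smul_apply, Complex.real_smul]

lemma aux_vvherm {d : ℕ} (v : Fin d → ℂ) :
    (vecMulVec v (star v)).IsHermitian := by
  unfold Matrix.IsHermitian
  ext i j
  simp [conjTranspose_apply, vecMulVec_apply, mul_comm]

lemma aux_trace_E_mul {d : ℕ} (v : Fin d → ℂ) (M : Matrix (Fin d) (Fin d) ℂ) :
    (vecMulVec v (star v) * M).trace = star v ⬝ᵥ (M *ᵥ v) := by
  simp only [Matrix.trace, Matrix.diag, Matrix.mul_apply, vecMulVec_apply,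
    dotProduct, mulVec, Pi.star_apply, RingHom.id_apply]
  rw [Finset.sum_comm]
  refine Finset.sum_congr rfl fun j _ => ?_
  rw [Finset.mul_sum]
  refine Finset.sum_congr rfl fun k _ => ?_
  ring

lemma aux_E_mulVec {d : ℕ} (v w : Fin d → ℂ) :
    vecMulVec v (star v) *ᵥ w = (star v ⬝ᵥ w) • v := by
  ext k
  simp only [mulVec, dotProduct, vecMulVec_apply, Pi.smul_apply, smul_eq_mul, Pi.star_apply]
  rw [Finset.sum_mul]
  refine Finset.sum_congr rfl fun j _ => ?_
  ring

lemma aux_dot_conj {d : ℕ} (v w : Fin d → ℂ) :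
    star w ⬝ᵥ v = starRingEnd ℂ (star v ⬝ᵥ w) := by
  simp only [dotProduct, map_sum]
  refine Finset.sum_congr rfl fun j _ => ?_
  rw [_root_.map_mul]
  simp only [Pi.star_apply, RCLike.star_def, Complex.conj_conj]
  ring

lemma aux_inner_dot {d : ℕ} (x y : EuclideanSpace ℂ (Fin d)) :
    (inner ℂ x y : ℂ) = star ⇑x ⬝ᵥ ⇑y := by
  rw [PiLp.inner_apply]
  refine Finset.sum_congr rfl fun i _ => ?_
  simp [RCLike.inner_apply, mul_comm]

lemma aux_sum_abs_eig_le {d : ℕ} (v₁ v₂ : EuclideanSpace ℂ (Fin d))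
    (hn₁ : ‖v₁‖ = 1) (hn₂ : ‖v₂‖ = 1) (c : ℝ) (hc : 0 ≤ c)
    {H : Matrix (Fin d) (Fin d) ℂ} (hH : H.IsHermitian)
    (hEq : H = (c : ℂ) • (vecMulVec ⇑v₁ (star ⇑v₁) - vecMulVec ⇑v₂ (star ⇑v₂))) :
    ∑ j, |hH.eigenvalues j| ≤ 2 * c := by
  set w := hH.eigenvectorBasis with hw
  set a : Fin d → ℂ := fun j => star (⇑v₁) ⬝ᵥ ⇑(w j) with ha
  set b : Fin d → ℂ := fun j => star (⇑v₂) ⬝ᵥ ⇑(w j) with hb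
  have hww : ∀ j, star ⇑(w j) ⬝ᵥ ⇑(w j) = 1 := by
    intro j
    rw [← aux_inner_dot]
    rw [@inner_self_eq_norm_sq_to_K ℂ]
    rw [w.orthonormal.1 j]
    norm_num
  have hμC : ∀ j, (hH.eigenvalues j : ℂ)
      = (c : ℂ) * ((Complex.normSq (a j) : ℂ) - (Complex.normSq (b j) : ℂ)) := by
    intro j
    have h1 : (hH.eigenvalues j : ℂ) = star ⇑(w j) ⬝ᵥ (H *ᵥ ⇑(w j)) := by
      rw [hH.mulVec_eigenvectorBasis]
      rw [show (hH.eigenvalues j • ⇑(hH.eigenvectorBasis j) : Fin d → ℂ)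
          = (hH.eigenvalues j : ℂ) • ⇑(hH.eigenvectorBasis j) by
        ext k; simp [Complex.real_smul]]
      rw [dotProduct_smul, ← hw, hww j, smul_eq_mul, mul_one]
    rw [h1, hEq, smul_mulVec, sub_mulVec, aux_E_mulVec, aux_E_mulVec,
      dotProduct_smul, dotProduct_sub, dotProduct_smul, dotProduct_smul,
      aux_dot_conj (⇑v₁) ⇑(w j), aux_dot_conj (⇑v₂) ⇑(w j)]
    simp only [smul_eq_mul, ← ha, ← hb, Complex.mul_conj]
    rfl
  have hμ : ∀ j, hH.eigenvalues j
      = c * (Complex.normSq (a j) - Complex.normSq (b j)) := by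
    intro j
    have := hμC j
    exact_mod_cast this
  have hpar : ∀ (v : EuclideanSpace ℂ (Fin d)), ‖v‖ = 1 →
      ∑ j, Complex.normSq (star (⇑v) ⬝ᵥ ⇑(w j)) = 1 := by
    intro v hn
    have h := w.sum_inner_mul_inner v v
    have h2 : ∀ j, (inner ℂ v (w j) : ℂ) * (inner ℂ (w j) v : ℂ)
        = (Complex.normSq (star (⇑v) ⬝ᵥ ⇑(w j)) : ℂ) := by
      intro j
      rw [← inner_conj_symm (w j) v, aux_inner_dot, Complex.mul_conj]
    rw [Finset.sum_congr rfl (fun j _ => h2 j)] at h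
    rw [@inner_self_eq_norm_sq_to_K ℂ, hn] at h
    norm_num at h
    exact_mod_cast h
  have hpa : ∑ j, Complex.normSq (a j) = 1 := hpar v₁ hn₁
  have hpb : ∑ j, Complex.normSq (b j) = 1 := hpar v₂ hn₂
  calc ∑ j, |hH.eigenvalues j|
      ≤ ∑ j, c * (Complex.normSq (a j) + Complex.normSq (b j)) := by
        refine Finset.sum_le_sum fun j _ => ?_
        rw [hμ j, abs_mul, abs_of_nonneg hc]
        refine mul_le_mul_of_nonneg_left ?_ hc
        have h1 := Complex.normSq_nonneg (a j)
        have h2 := Complex.normSq_nonneg (b j)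
        rw [abs_le]
        constructor <;> linarith
    _ = 2 * c := by
        rw [← Finset.mul_sum, Finset.sum_add_distrib, hpa, hpb]
        ring

lemma aux_herm_rsmul {d : ℕ} (r : ℝ) {M : Matrix (Fin d) (Fin d) ℂ}
    (h : M.IsHermitian) : (r • M).IsHermitian := by
  rw [aux_rsmul]
  unfold Matrix.IsHermitian at h ⊢
  rw [conjTranspose_smul, h]
  simp [Complex.star_def, Complex.conj_ofReal]

lemma aux_frob_smul {d : ℕ} (r : ℝ) (M : Matrix (Fin d) (Fin d) ℂ) :
    frob (r • M) = |r| * frob M := by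
  unfold frob
  rw [show ∑ i, ∑ j, ‖(r • M) i j‖ ^ 2
      = r ^ 2 * ∑ i, ∑ j, ‖M i j‖ ^ 2 by
    rw [Finset.mul_sum]
    refine Finset.sum_congr rfl fun i _ => ?_
    rw [Finset.mul_sum]
    refine Finset.sum_congr rfl fun j _ => ?_
    rw [Matrix.smul_apply, Complex.real_smul, norm_mul, Complex.norm_real, Real.norm_eq_abs, mul_pow, sq_abs]]
  rw [Real.sqrt_mul (sq_nonneg r), Real.sqrt_sq_eq_abs]

lemma aux_unit_dot {d : ℕ} (v : EuclideanSpace ℂ (Fin d)) (hn : ‖v‖ = 1) :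
    star ⇑v ⬝ᵥ ⇑v = 1 := by
  rw [← aux_inner_dot, @inner_self_eq_norm_sq_to_K ℂ, hn]
  norm_num

lemma aux_trace_E {d : ℕ} (v : Fin d → ℂ) :
    (vecMulVec v (star v)).trace = star v ⬝ᵥ v := by
  simp only [Matrix.trace, Matrix.diag, vecMulVec_apply, dotProduct, Pi.star_apply]
  exact Finset.sum_congr rfl fun j _ => by ring

/-- If `M₀ + M₁ = I` with `λ_max(M₀) - λ_min(M₀) > 1`, and `x₀` is
an interior point (Frobenius `ε`-ball of Hermitian matrices around `x₀`
contained in the convex cone `C`) with `Tr x₀ > 0`, then some trace-one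
`ρ₀, ρ₁ ∈ C` violate the quantum state-discrimination bound. -/
theorem stmt9 {d : ℕ} (M₀ M₁ : Matrix (Fin d) (Fin d) ℂ)
    (hM₀ : M₀.IsHermitian) (hM₁ : M₁.IsHermitian) (hsum : M₀ + M₁ = 1)
    (hr : eigMax M₀ - eigMin M₀ > 1)
    (C : Set (Matrix (Fin d) (Fin d) ℂ)) (hCconv : Convex ℝ C)
    (hCcone : ∀ (r : ℝ), 0 ≤ r → ∀ x ∈ C, r • x ∈ C)
    (x₀ : Matrix (Fin d) (Fin d) ℂ) (hx₀ : x₀.IsHermitian) (hx₀C : x₀ ∈ C)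
    (ε : ℝ) (hε : 0 < ε)
    (hball : ∀ y : Matrix (Fin d) (Fin d) ℂ, y.IsHermitian →
      frob (y - x₀) ≤ ε → y ∈ C)
    (htr : 0 < reTr x₀) :
    ∃ ρ₀ ∈ C, ∃ ρ₁ ∈ C, ρ₀.trace = 1 ∧ ρ₁.trace = 1 ∧
      (1 / 2) * reTr (ρ₀ * M₁) + (1 / 2) * reTr (ρ₁ * M₀) <
        1 / 2 - (1 / 2) * traceNorm ((1 / 2 : ℝ) • ρ₀ - (1 / 2 : ℝ) • ρ₁) := by
  classical
  rcases Nat.eq_zero_or_pos d with hd | hd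
  · exfalso
    subst hd
    rw [eigMax, dif_pos hM₀, eigMin, dif_pos hM₀, Real.iSup_of_isEmpty,
      Real.iInf_of_isEmpty] at hr
    norm_num at hr
  haveI : Nonempty (Fin d) := Fin.pos_iff_nonempty.mp hd
  obtain ⟨i₁, hi₁⟩ := Finite.exists_max hM₀.eigenvalues
  obtain ⟨i₂, hi₂⟩ := Finite.exists_min hM₀.eigenvalues
  set lam₁ := hM₀.eigenvalues i₁ with hl1
  set lam₂ := hM₀.eigenvalues i₂ with hl2
  have hmax : eigMax M₀ = lam₁ := by
    rw [eigMax, dif_pos hM₀]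
    exact le_antisymm (ciSup_le hi₁) (le_ciSup (f := hM₀.eigenvalues) (Finite.bddAbove_range _) i₁)
  have hmin : eigMin M₀ = lam₂ := by
    rw [eigMin, dif_pos hM₀]
    exact le_antisymm (ciInf_le (f := hM₀.eigenvalues) (Finite.bddBelow_range _) i₂) (le_ciInf hi₂)
  have hgap : 1 < lam₁ - lam₂ := by rw [hmax, hmin] at hr; linarith
  set V₁ := hM₀.eigenvectorBasis i₁ with hV1
  set V₂ := hM₀.eigenvectorBasis i₂ with hV2
  have hn₁ : ‖V₁‖ = 1 := hM₀.eigenvectorBasis.orthonormal.1 i₁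
  have hn₂ : ‖V₂‖ = 1 := hM₀.eigenvectorBasis.orthonormal.1 i₂
  set N : Matrix (Fin d) (Fin d) ℂ :=
    vecMulVec ⇑V₁ (star ⇑V₁) - vecMulVec ⇑V₂ (star ⇑V₂) with hN
  have hNherm : N.IsHermitian := (aux_vvherm _).sub (aux_vvherm _)
  have hNtr : N.trace = 0 := by
    rw [hN, trace_sub, aux_trace_E, aux_trace_E, aux_unit_dot V₁ hn₁,
      aux_unit_dot V₂ hn₂, sub_self]
  have hNM : (N * M₀).trace = (lam₁ : ℂ) - (lam₂ : ℂ) := by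
    rw [hN, sub_mul, trace_sub, aux_trace_E_mul, aux_trace_E_mul,
      hM₀.mulVec_eigenvectorBasis, hM₀.mulVec_eigenvectorBasis,
      dotProduct_smul, dotProduct_smul, aux_unit_dot V₁ hn₁, aux_unit_dot V₂ hn₂]
    simp [Complex.real_smul]
    rfl
  set T := reTr x₀ with hT
  have hTpos : 0 < T := htr
  have hx₀tr : x₀.trace = (T : ℂ) := by
    have hconj : (starRingEnd ℂ) x₀.trace = x₀.trace := by
      rw [show ((starRingEnd ℂ) x₀.trace) = star x₀.trace from rfl,
        ← Matrix.trace_conjTranspose, hx₀.eq]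
    exact ((Complex.conj_eq_iff_re).mp hconj).symm
  set F := frob N with hF
  have hF0 : 0 ≤ F := Real.sqrt_nonneg _
  set δ := ε / (F + 1) with hδ
  have hδpos : 0 < δ := div_pos hε (by linarith)
  have hδF : δ * F ≤ ε := by
    have h1 : δ * (F + 1) = ε := by
      rw [hδ]; exact div_mul_cancel₀ ε (by linarith)
    nlinarith
  set y₀ := x₀ + δ • N with hy₀
  set y₁ := x₀ - δ • N with hy₁
  have hy₀h : y₀.IsHermitian := hx₀.add (aux_herm_rsmul δ hNherm)
  have hy₁h : y₁.IsHermitian := hx₀.sub (aux_herm_rsmul δ hNherm)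
  have hy₀C : y₀ ∈ C := by
    refine hball _ hy₀h ?_
    rw [hy₀, add_sub_cancel_left, aux_frob_smul, abs_of_pos hδpos]
    exact hδF
  have hy₁C : y₁ ∈ C := by
    refine hball _ hy₁h ?_
    rw [hy₁, sub_sub_cancel_left, ← neg_smul, aux_frob_smul, abs_neg,
      abs_of_pos hδpos]
    exact hδF
  have hy₀tr : y₀.trace = (T : ℂ) := by
    rw [hy₀, trace_add, trace_smul, hNtr, smul_zero, add_zero, hx₀tr]
  have hy₁tr : y₁.trace = (T : ℂ) := by
    rw [hy₁, trace_sub, trace_smul, hNtr, smul_zero, sub_zero, hx₀tr]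
  set ρ₀ := T⁻¹ • y₀ with hρ₀
  set ρ₁ := T⁻¹ • y₁ with hρ₁
  have hρ₀C : ρ₀ ∈ C := hCcone _ (inv_nonneg.mpr hTpos.le) _ hy₀C
  have hρ₁C : ρ₁ ∈ C := hCcone _ (inv_nonneg.mpr hTpos.le) _ hy₁C
  have hTne : T ≠ 0 := hTpos.ne'
  have hsmultr : ∀ (r : ℝ) (A : Matrix (Fin d) (Fin d) ℂ),
      (r • A).trace = (r : ℂ) * A.trace := by
    intro r A; rw [trace_smul]; simp [Complex.real_smul]
  have hρ₀tr : ρ₀.trace = 1 := by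
    rw [hρ₀, hsmultr, hy₀tr, ← Complex.ofReal_mul, inv_mul_cancel₀ hTne,
      Complex.ofReal_one]
  have hρ₁tr : ρ₁.trace = 1 := by
    rw [hρ₁, hsmultr, hy₁tr, ← Complex.ofReal_mul, inv_mul_cancel₀ hTne,
      Complex.ofReal_one]
  refine ⟨ρ₀, hρ₀C, ρ₁, hρ₁C, hρ₀tr, hρ₁tr, ?_⟩
  set c := δ / T with hc
  have hcpos : 0 < c := div_pos hδpos hTpos
  have hD : (1 / 2 : ℝ) • ρ₀ - (1 / 2 : ℝ) • ρ₁ = c • N := by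
    rw [hρ₀, hρ₁, hy₀, hy₁, hc]
    match_scalars <;> field_simp <;> ring
  have hdiff : ρ₀ - ρ₁ = (2 * c) • N := by
    rw [hρ₀, hρ₁, hy₀, hy₁, hc]
    match_scalars <;> field_simp <;> ring
  have hDherm : ((1 / 2 : ℝ) • ρ₀ - (1 / 2 : ℝ) • ρ₁).IsHermitian := by
    rw [hD]; exact aux_herm_rsmul c hNherm
  have htn : traceNorm ((1 / 2 : ℝ) • ρ₀ - (1 / 2 : ℝ) • ρ₁) ≤ 2 * c := by
    rw [traceNorm, dif_pos hDherm]
    refine aux_sum_abs_eig_le V₁ V₂ hn₁ hn₂ c hcpos.le hDherm ?_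
    rw [hD, aux_rsmul, hN]
  have hM₁eq : M₁ = 1 - M₀ := eq_sub_of_add_eq' hsum
  have hretr_sub : ∀ A B : Matrix (Fin d) (Fin d) ℂ,
      reTr (A - B) = reTr A - reTr B := by
    intro A B; rw [reTr, reTr, reTr, trace_sub, Complex.sub_re]
  have h₁ : reTr (ρ₀ * M₁) = 1 - reTr (ρ₀ * M₀) := by
    rw [hM₁eq, mul_sub, mul_one, hretr_sub, reTr, hρ₀tr]
    norm_num
  have h₂ : reTr (ρ₀ * M₀) - reTr (ρ₁ * M₀) = 2 * c * (lam₁ - lam₂) := by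
    rw [← hretr_sub, ← sub_mul, hdiff, reTr, smul_mul_assoc, hsmultr, hNM]
    rw [show ((2 * c : ℝ) : ℂ) * ((lam₁ : ℂ) - (lam₂ : ℂ))
        = ((2 * c * (lam₁ - lam₂) : ℝ) : ℂ) by push_cast; ring]
    exact Complex.ofReal_re _
  have hprod : c < c * (lam₁ - lam₂) := by nlinarith
  rw [h₁]
  linarith [htn, h₂, hprod]
end
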